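/- Fix p ∈ [0,1] and ε > 0. Let θ = |1 − f(p) − g(p)|, q = max{p, 1−p}, and δ = min_{v∈V} deg v. Sample x(0) ∈ {0,1}^V from the product measure with independent Bernoulli(p) coordinates and let x(t+1) = Γ(x(t)) be the deterministic process. Then with probability at least 1 − 2|V| e^{−2δε²} over the choice of x(0), for every t ≥ 1 one has max_{v∈V} |x_v(t) − γ̃^t(p)| ≤ (qθ + Mε) e^{2M(t−1)}, where γ̃(s) = s(1−f(s)) + (1−s)g(s) and γ̃^t denotes the t-fold iterate of γ̃. -/

import Mathlib

open MeasureTheory Finset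

noncomputable section

/-- Real value of a Boolean state. -/
def b2r (b : Bool) : ℝ := if b then 1 else 0

/-- Neighborhood average `y_{N_v} = (deg v)⁻¹ ∑_{w ∈ N_v} y_w`. -/
def nbrAvg {V : Type} [Fintype V] (G : SimpleGraph V) [DecidableRel G.Adj]
    (y : V → ℝ) (v : V) : ℝ :=
  (∑ w ∈ G.neighborFinset v, y w) / (G.degree v : ℝ)

/-- `γ(a,b) = a(1 - f(b)) + (1 - a) g(b)`. -/
def gam (f g : ℝ → ℝ) (a b : ℝ) : ℝ := a * (1 - f b) + (1 - a) * g b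

/-- The deterministic process `x(t+1)_v = γ(x(t)_v, x(t)_{N_v})`. -/
def det {V : Type} [Fintype V] (G : SimpleGraph V) [DecidableRel G.Adj]
    (f g : ℝ → ℝ) (x0 : V → ℝ) : ℕ → V → ℝ
  | 0 => x0
  | t + 1 => fun v => gam f g (det G f g x0 t v) (nbrAvg G (det G f g x0 t) v)

/-- Product measure on `V → Bool` with independent Bernoulli(`p`) coordinates,
written out by its mass function. -/
def bernoulliProduct {V : Type} [Fintype V] [DecidableEq V] (p : ℝ) :
    Measure (V → Bool) :=
  ∑ y : V → Bool, ENNReal.ofReal (∏ v, if y v then p else 1 - p) • Measure.dirac y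


section Hoeff

lemma hoeff_log (p : ℝ) (hp0 : 0 ≤ p) (hp1 : p ≤ 1) (t : ℝ) :
    Real.log (1 - p + p * Real.exp t) ≤ p * t + t ^ 2 / 8 := by
  have hpos : ∀ s : ℝ, 0 < 1 - p + p * Real.exp s := by
    intro s
    rcases eq_or_lt_of_le hp0 with h | h
    · simp [← h]
    · nlinarith [Real.exp_pos s, mul_pos h (Real.exp_pos s)]
  set F : ℝ → ℝ := fun s => p * s + s ^ 2 / 8 - Real.log (1 - p + p * Real.exp s) with hFdef
  set G : ℝ → ℝ := fun s => p + s / 4 - p * Real.exp s / (1 - p + p * Real.exp s) with hGdef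
  have hh : ∀ s : ℝ, HasDerivAt (fun u => 1 - p + p * Real.exp u) (p * Real.exp s) s := by
    intro s
    exact ((Real.hasDerivAt_exp s).const_mul p).const_add (1 - p)
  have hF : ∀ s : ℝ, HasDerivAt F (G s) s := by
    intro s
    have h1 : HasDerivAt (fun u : ℝ => p * u) p s := by simpa using (hasDerivAt_id s).const_mul p
    have h2 : HasDerivAt (fun u : ℝ => u ^ 2 / 8) ((2 : ℕ) * s ^ 1 / 8) s :=
      (hasDerivAt_pow 2 s).div_const 8
    have h3 : HasDerivAt (fun u => Real.log (1 - p + p * Real.exp u))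
        (p * Real.exp s / (1 - p + p * Real.exp s)) s := (hh s).log (hpos s).ne'
    have := (h1.add h2).sub h3
    exact this.congr_deriv (by simp only [hGdef]; push_cast; ring)
  have hG : ∀ s : ℝ, HasDerivAt G
      (1/4 - (p * Real.exp s * (1 - p + p * Real.exp s) -
        p * Real.exp s * (p * Real.exp s)) / (1 - p + p * Real.exp s) ^ 2) s := by
    intro s
    have h1 : HasDerivAt (fun u : ℝ => p + u / 4) (1/4) s := by
      simpa using ((hasDerivAt_id s).div_const 4).const_add p
    have h2 : HasDerivAt (fun u => p * Real.exp u / (1 - p + p * Real.exp u))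
        ((p * Real.exp s * (1 - p + p * Real.exp s) -
          p * Real.exp s * (p * Real.exp s)) / (1 - p + p * Real.exp s) ^ 2) s :=
      ((Real.hasDerivAt_exp s).const_mul p).div (hh s) (hpos s).ne'
    have h3 := h1.sub h2
    simp only [one_div] at h3 ⊢
    exact h3
  have hKnn : ∀ s : ℝ, 0 ≤ 1/4 - (p * Real.exp s * (1 - p + p * Real.exp s) -
      p * Real.exp s * (p * Real.exp s)) / (1 - p + p * Real.exp s) ^ 2 := by
    intro s
    rw [sub_nonneg, div_le_iff₀ (pow_pos (hpos s) 2)]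
    nlinarith [hpos s, mul_nonneg hp0 (Real.exp_pos s).le, sq_nonneg ((1-p) - p * Real.exp s)]
  have hGmono : Monotone G :=
    monotone_of_deriv_nonneg (fun s => (hG s).differentiableAt)
      (fun s => by rw [(hG s).deriv]; exact hKnn s)
  have hG0 : G 0 = 0 := by simp [hGdef]
  have hFc : Continuous F := by
    have : Differentiable ℝ F := fun s => (hF s).differentiableAt
    exact this.continuous
  have hF0 : F 0 = 0 := by simp [hFdef]
  have hFnonneg : 0 ≤ F t := by
    rcases le_or_gt 0 t with ht | ht
    · have hmono : MonotoneOn F (Set.Ici 0) := by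
        apply monotoneOn_of_deriv_nonneg (convex_Ici 0) (hFc.continuousOn)
        · intro s _; exact (hF s).differentiableAt.differentiableWithinAt
        · intro s hs
          rw [(hF s).deriv, ← hG0]
          exact hGmono (le_of_lt (by simpa using hs))
      have := hmono (Set.self_mem_Ici) (Set.mem_Ici.2 ht) ht
      linarith [hF0 ▸ this]
    · have hmono : AntitoneOn F (Set.Iic 0) := by
        apply antitoneOn_of_deriv_nonpos (convex_Iic 0) (hFc.continuousOn)
        · intro s _; exact (hF s).differentiableAt.differentiableWithinAt
        · intro s hs
          rw [(hF s).deriv, ← hG0]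
          exact hGmono (le_of_lt (by simpa using hs))
      have := hmono (Set.mem_Iic.2 ht.le) (Set.self_mem_Iic) ht.le
      linarith [hF0 ▸ this]
  have hEq : F t = p * t + t ^ 2 / 8 - Real.log (1 - p + p * Real.exp t) := rfl
  rw [hEq] at hFnonneg
  linarith

lemma hoeff_mgf (p : ℝ) (hp0 : 0 ≤ p) (hp1 : p ≤ 1) (t : ℝ) :
    1 - p + p * Real.exp t ≤ Real.exp (p * t + t ^ 2 / 8) := by
  have hpos : 0 < 1 - p + p * Real.exp t := by
    rcases eq_or_lt_of_le hp0 with h | h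
    · simp [← h]
    · nlinarith [Real.exp_pos t, mul_pos h (Real.exp_pos t)]
  rw [← Real.exp_log hpos]
  exact Real.exp_le_exp.2 (hoeff_log p hp0 hp1 t)

end Hoeff

section Prob

variable {V : Type} [Fintype V] [DecidableEq V]

lemma weight_nonneg (p : ℝ) (hp0 : 0 ≤ p) (hp1 : p ≤ 1) (y : V → Bool) :
    0 ≤ ∏ v, (if y v then p else 1 - p) := by
  apply Finset.prod_nonneg
  intro v _
  cases y v <;> simp <;> linarith

lemma sum_weight_exp (N : Finset V) (p l : ℝ) :
    ∑ y : V → Bool, (∏ v, if y v then p else 1 - p) * Real.exp (l * ∑ w ∈ N, b2r (y w))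
      = (1 - p + p * Real.exp l) ^ N.card := by
  have key : ∀ y : V → Bool,
      (∏ v, if y v then p else 1 - p) * Real.exp (l * ∑ w ∈ N, b2r (y w))
        = ∏ v, ((if y v then p else 1 - p) *
            Real.exp (l * (if v ∈ N then b2r (y v) else 0))) := by
    intro y
    rw [Finset.prod_mul_distrib]
    congr 1
    rw [show (∑ w ∈ N, b2r (y w)) = ∑ v, if v ∈ N then b2r (y v) else 0 by
        rw [Finset.sum_ite_mem, Finset.univ_inter],
      Finset.mul_sum, Real.exp_sum]
  rw [Finset.sum_congr rfl (fun y _ => key y)]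
  have hfac := Finset.prod_univ_sum (t := fun _ : V => (univ : Finset Bool))
    (f := fun v b => (if b then p else 1 - p) * Real.exp (l * if v ∈ N then b2r b else 0))
  rw [Fintype.piFinset_univ] at hfac
  rw [← hfac]
  have : ∀ v : V, (∑ b : Bool, (if b then p else 1 - p) *
      Real.exp (l * (if v ∈ N then b2r b else 0)))
      = if v ∈ N then (1 - p + p * Real.exp l) else 1 := by
    intro v
    rw [Fintype.sum_bool]
    by_cases hv : v ∈ N <;> simp [hv, b2r] <;> ring
  rw [Finset.prod_congr rfl (fun v _ => this v), Finset.prod_ite_mem,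
    Finset.univ_inter, Finset.prod_const]

lemma sum_weight_one (p : ℝ) :
    ∑ y : V → Bool, (∏ v, if y v then p else 1 - p) = 1 := by
  have := sum_weight_exp (V := V) ∅ p 0
  simpa using this

lemma mgf_le (N : Finset V) (p l : ℝ) (hp0 : 0 ≤ p) (hp1 : p ≤ 1) :
    ∑ y : V → Bool, (∏ v, if y v then p else 1 - p) *
        Real.exp (l * ((∑ w ∈ N, b2r (y w)) - N.card * p))
      ≤ Real.exp (N.card * l ^ 2 / 8) := by
  have step : ∀ y : V → Bool,
      (∏ v, if y v then p else 1 - p) * Real.exp (l * ((∑ w ∈ N, b2r (y w)) - N.card * p))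
        = ((∏ v, if y v then p else 1 - p) * Real.exp (l * ∑ w ∈ N, b2r (y w)))
            * Real.exp (-(l * (N.card * p))) := by
    intro y
    rw [mul_assoc, ← Real.exp_add]
    congr 2
    ring
  rw [Finset.sum_congr rfl (fun y _ => step y), ← Finset.sum_mul, sum_weight_exp]
  have hbase : 0 ≤ 1 - p + p * Real.exp l := by
    rcases eq_or_lt_of_le hp0 with h | h
    · simp [← h]
    · nlinarith [Real.exp_pos l, mul_pos h (Real.exp_pos l)]
  calc (1 - p + p * Real.exp l) ^ N.card * Real.exp (-(l * (N.card * p)))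
      ≤ (Real.exp (p * l + l ^ 2 / 8)) ^ N.card * Real.exp (-(l * (N.card * p))) := by
        apply mul_le_mul_of_nonneg_right _ (Real.exp_pos _).le
        exact pow_le_pow_left₀ hbase (hoeff_mgf p hp0 hp1 l) _
    _ = Real.exp (N.card * l ^ 2 / 8) := by
        rw [← Real.exp_nat_mul, ← Real.exp_add]
        congr 1
        ring

lemma tail_le (N : Finset V) (hcard : 0 < N.card) (p eps : ℝ) (hp0 : 0 ≤ p) (hp1 : p ≤ 1) (he : 0 < eps) :
    ∑ y ∈ Finset.univ.filter (fun y : V → Bool =>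
        eps < |(∑ w ∈ N, b2r (y w)) / N.card - p|),
      (∏ v, if y v then p else 1 - p)
      ≤ 2 * Real.exp (-2 * N.card * eps ^ 2) := by
  set d : ℝ := (N.card : ℝ) with hd
  have hd0 : 0 ≤ d := Nat.cast_nonneg _
  set S : (V → Bool) → ℝ := fun y => ∑ w ∈ N, b2r (y w) with hS
  set w : (V → Bool) → ℝ := fun y => ∏ v, if y v then p else 1 - p with hw
  have hwn : ∀ y, 0 ≤ w y := fun y => weight_nonneg p hp0 hp1 y
  -- pointwise bound on the filtered set
  have hpt : ∀ y ∈ Finset.univ.filter (fun y : V → Bool => eps < |S y / d - p|),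
      w y ≤ w y * Real.exp ((4 * eps) * (S y - d * p)) * Real.exp (-(4 * d * eps ^ 2))
          + w y * Real.exp ((-(4 * eps)) * (S y - d * p)) * Real.exp (-(4 * d * eps ^ 2)) := by
    intro y hy
    rw [Finset.mem_filter] at hy
    have habs : eps < |S y / d - p| := hy.2
    have hdpos : 0 < d := by
      simp only [hd]
      exact_mod_cast hcard
    have hA : d * eps < |S y - d * p| := by
      have h3 : S y / d - p = (S y - d * p) / d := by field_simp
      rw [h3, abs_div, abs_of_pos hdpos, lt_div_iff₀ hdpos] at habs
      nlinarith [habs]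
    rcases lt_abs.mp hA with h | h
    · have h1 : (1:ℝ) ≤ Real.exp ((4 * eps) * (S y - d * p)) * Real.exp (-(4 * d * eps ^ 2)) := by
        rw [← Real.exp_add, ← Real.exp_zero]
        apply Real.exp_le_exp.2
        nlinarith
      nlinarith [hwn y, mul_nonneg (mul_nonneg (hwn y) (Real.exp_pos ((-(4 * eps)) * (S y - d * p))).le) (Real.exp_pos (-(4 * d * eps ^ 2))).le,
        mul_le_mul_of_nonneg_left h1 (hwn y)]
    · have h1 : (1:ℝ) ≤ Real.exp ((-(4 * eps)) * (S y - d * p)) * Real.exp (-(4 * d * eps ^ 2)) := by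
        rw [← Real.exp_add, ← Real.exp_zero]
        apply Real.exp_le_exp.2
        nlinarith
      nlinarith [hwn y, mul_nonneg (mul_nonneg (hwn y) (Real.exp_pos ((4 * eps) * (S y - d * p))).le) (Real.exp_pos (-(4 * d * eps ^ 2))).le,
        mul_le_mul_of_nonneg_left h1 (hwn y)]
  calc ∑ y ∈ Finset.univ.filter (fun y : V → Bool => eps < |S y / d - p|), w y
      ≤ ∑ y ∈ Finset.univ.filter (fun y : V → Bool => eps < |S y / d - p|),
          (w y * Real.exp ((4 * eps) * (S y - d * p)) * Real.exp (-(4 * d * eps ^ 2))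
          + w y * Real.exp ((-(4 * eps)) * (S y - d * p)) * Real.exp (-(4 * d * eps ^ 2))) :=
        Finset.sum_le_sum hpt
    _ ≤ ∑ y : V → Bool,
          (w y * Real.exp ((4 * eps) * (S y - d * p)) * Real.exp (-(4 * d * eps ^ 2))
          + w y * Real.exp ((-(4 * eps)) * (S y - d * p)) * Real.exp (-(4 * d * eps ^ 2))) := by
        apply Finset.sum_le_sum_of_subset_of_nonneg (Finset.filter_subset _ _)
        intro y _ _
        apply add_nonneg <;>
          exact mul_nonneg (mul_nonneg (hwn y) (Real.exp_pos _).le) (Real.exp_pos _).le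
    _ = (∑ y : V → Bool, w y * Real.exp ((4 * eps) * (S y - d * p))) * Real.exp (-(4 * d * eps ^ 2))
        + (∑ y : V → Bool, w y * Real.exp ((-(4 * eps)) * (S y - d * p))) * Real.exp (-(4 * d * eps ^ 2)) := by
        rw [Finset.sum_add_distrib, Finset.sum_mul, Finset.sum_mul]
    _ ≤ Real.exp (d * (4 * eps) ^ 2 / 8) * Real.exp (-(4 * d * eps ^ 2))
        + Real.exp (d * (-(4 * eps)) ^ 2 / 8) * Real.exp (-(4 * d * eps ^ 2)) := by
        apply add_le_add <;>
          exact mul_le_mul_of_nonneg_right (mgf_le N p _ hp0 hp1) (Real.exp_pos _).le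
    _ = 2 * Real.exp (-2 * d * eps ^ 2) := by
        rw [← Real.exp_add, ← Real.exp_add]
        ring_nf

lemma union_bound {β : Type} [DecidableEq β] (s : Finset β) (f : β → ℝ)
    (hf : ∀ y, 0 ≤ f y) (P : V → β → Prop) [∀ v y, Decidable (P v y)] :
    ∑ y ∈ s.filter (fun y => ¬ ∀ v, P v y), f y
      ≤ ∑ v : V, ∑ y ∈ s.filter (fun y => ¬ P v y), f y := by
  rw [Finset.sum_filter]
  rw [Finset.sum_congr rfl (fun v (_ : v ∈ (univ : Finset V)) =>
    Finset.sum_filter (fun y => ¬ P v y) f), Finset.sum_comm]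
  apply Finset.sum_le_sum
  intro y _
  by_cases h : ∀ v, P v y
  · rw [if_neg (by simp [h])]
    apply Finset.sum_nonneg
    intro i _
    split <;> simp [hf y]
  · push_neg at h
    obtain ⟨v, hv⟩ := h
    have hterm : (if ¬ P v y then f y else 0) = f y := by simp [hv]
    calc (if ¬ ∀ v, P v y then f y else 0) ≤ f y := by
          split <;> simp [hf y]
      _ ≤ ∑ v : V, if ¬ P v y then f y else 0 := by
          have hs := Finset.single_le_sum (f := fun v => if ¬ P v y then f y else 0)
            (fun i _ => by split <;> simp [hf y]) (Finset.mem_univ v)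
          simpa [hv] using hs

lemma bp_ge (p : ℝ) (hp0 : 0 ≤ p) (hp1 : p ≤ 1) (Sset : Set (V → Bool))
    (E : Finset (V → Bool)) (hE : ∀ y ∈ E, y ∈ Sset) :
    ENNReal.ofReal (∑ y ∈ E, ∏ v, if y v then p else 1 - p)
      ≤ bernoulliProduct (V := V) p Sset := by
  rw [bernoulliProduct, Measure.finset_sum_apply,
    ENNReal.ofReal_sum_of_nonneg (fun y _ => weight_nonneg p hp0 hp1 y)]
  calc ∑ y ∈ E, ENNReal.ofReal (∏ v, if y v then p else 1 - p)
      = ∑ y ∈ E, (ENNReal.ofReal (∏ v, if y v then p else 1 - p) • Measure.dirac y) Sset := by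
        apply Finset.sum_congr rfl
        intro y hy
        rw [Measure.smul_apply, Measure.dirac_apply_of_mem (hE y hy), smul_eq_mul, mul_one]
    _ ≤ ∑ y : V → Bool, (ENNReal.ofReal (∏ v, if y v then p else 1 - p) • Measure.dirac y) Sset :=
        Finset.sum_le_sum_of_subset (Finset.subset_univ E)

end Prob

section DetPart




section Det
variable {V : Type} [Fintype V] {G : SimpleGraph V} [DecidableRel G.Adj]
  {f g : ℝ → ℝ} {M : ℝ}

lemma M_nonneg (f : ℝ → ℝ) (M : ℝ)
    (hfLip : ∀ a ∈ Set.Icc (0:ℝ) 1, ∀ b ∈ Set.Icc (0:ℝ) 1, |f a - f b| ≤ M * |a - b|) :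
    0 ≤ M := by
  have h := hfLip 0 (by norm_num) 1 (by norm_num)
  have := abs_nonneg (f 0 - f 1)
  simp only [zero_sub, abs_neg, abs_one, mul_one] at h
  linarith

lemma nbrAvg_mem_Icc (hdeg : ∀ v : V, 0 < G.degree v)
    (x : V → ℝ) (hx : ∀ w, x w ∈ Set.Icc (0:ℝ) 1) (v : V) :
    nbrAvg G x v ∈ Set.Icc (0:ℝ) 1 := by
  have hd : (0:ℝ) < (G.degree v : ℝ) := by exact_mod_cast hdeg v
  constructor
  · apply div_nonneg _ hd.le
    exact Finset.sum_nonneg fun w _ => (hx w).1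
  · rw [nbrAvg, div_le_one hd]
    calc ∑ w ∈ G.neighborFinset v, x w ≤ ∑ w ∈ G.neighborFinset v, 1 :=
          Finset.sum_le_sum fun w _ => (hx w).2
      _ = (G.degree v : ℝ) := by rw [Finset.sum_const, ← SimpleGraph.card_neighborFinset_eq_degree]; simp

lemma nbrAvg_close (hdeg : ∀ v : V, 0 < G.degree v) (x : V → ℝ) (m D : ℝ) (hD : 0 ≤ D) (h : ∀ w, |x w - m| ≤ D) (v : V) :
    |nbrAvg G x v - m| ≤ D := by
  have hd : (0:ℝ) < (G.degree v : ℝ) := by exact_mod_cast hdeg v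
  have e : nbrAvg G x v - m = (∑ w ∈ G.neighborFinset v, (x w - m)) / (G.degree v : ℝ) := by
    rw [nbrAvg, Finset.sum_sub_distrib, Finset.sum_const, sub_div,
      ← SimpleGraph.card_neighborFinset_eq_degree]
    simp only [nsmul_eq_mul]
    congr 1
    have hne : ((#(G.neighborFinset v) : ℝ)) ≠ 0 := by
      rw [SimpleGraph.card_neighborFinset_eq_degree]; exact hd.ne'
    field_simp
  rw [e, abs_div, abs_of_pos hd, div_le_iff₀ hd]
  calc |∑ w ∈ G.neighborFinset v, (x w - m)| ≤ ∑ w ∈ G.neighborFinset v, |x w - m| :=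
        Finset.abs_sum_le_sum_abs _ _
    _ ≤ ∑ w ∈ G.neighborFinset v, D := Finset.sum_le_sum fun w _ => h w
    _ = D * (G.degree v : ℝ) := by rw [Finset.sum_const, ← SimpleGraph.card_neighborFinset_eq_degree, nsmul_eq_mul, mul_comm]

lemma gam_mem_Icc
    (hf01 : ∀ a ∈ Set.Icc (0:ℝ) 1, f a ∈ Set.Icc (0:ℝ) 1)
    (hg01 : ∀ a ∈ Set.Icc (0:ℝ) 1, g a ∈ Set.Icc (0:ℝ) 1) (a b : ℝ) (ha : a ∈ Set.Icc (0:ℝ) 1) (hb : b ∈ Set.Icc (0:ℝ) 1) :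
    gam f g a b ∈ Set.Icc (0:ℝ) 1 := by
  obtain ⟨hf1, hf2⟩ := hf01 b hb
  obtain ⟨hg1, hg2⟩ := hg01 b hb
  constructor <;> [skip; skip] <;> rw [gam] <;> nlinarith [ha.1, ha.2]

lemma det_mem_Icc (hdeg : ∀ v : V, 0 < G.degree v)
    (hf01 : ∀ a ∈ Set.Icc (0:ℝ) 1, f a ∈ Set.Icc (0:ℝ) 1)
    (hg01 : ∀ a ∈ Set.Icc (0:ℝ) 1, g a ∈ Set.Icc (0:ℝ) 1) (x0 : V → ℝ) (hx0 : ∀ w, x0 w ∈ Set.Icc (0:ℝ) 1) :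
    ∀ t v, det G f g x0 t v ∈ Set.Icc (0:ℝ) 1 := by
  intro t
  induction t with
  | zero => exact hx0
  | succ t ih =>
    intro v
    exact gam_mem_Icc hf01 hg01 _ _ (ih v)
      (nbrAvg_mem_Icc hdeg _ (fun w => ih w) v)

lemma iter_mem_Icc
    (hf01 : ∀ a ∈ Set.Icc (0:ℝ) 1, f a ∈ Set.Icc (0:ℝ) 1)
    (hg01 : ∀ a ∈ Set.Icc (0:ℝ) 1, g a ∈ Set.Icc (0:ℝ) 1) (p : ℝ) (hp : p ∈ Set.Icc (0:ℝ) 1) :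
    ∀ t, (fun s => s * (1 - f s) + (1 - s) * g s)^[t] p ∈ Set.Icc (0:ℝ) 1 := by
  intro t
  induction t with
  | zero => exact hp
  | succ t ih =>
    rw [Function.iterate_succ_apply']
    exact gam_mem_Icc hf01 hg01 _ _ ih ih

lemma gam_diff1
    (hf01 : ∀ a ∈ Set.Icc (0:ℝ) 1, f a ∈ Set.Icc (0:ℝ) 1)
    (hg01 : ∀ a ∈ Set.Icc (0:ℝ) 1, g a ∈ Set.Icc (0:ℝ) 1) (a m b : ℝ) (hb : b ∈ Set.Icc (0:ℝ) 1) :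
    |gam f g a b - gam f g m b| ≤ |a - m| := by
  have e : gam f g a b - gam f g m b = (a - m) * (1 - f b - g b) := by rw [gam, gam]; ring
  rw [e, abs_mul]
  have h1 : |1 - f b - g b| ≤ 1 := by
    obtain ⟨hf1, hf2⟩ := hf01 b hb
    obtain ⟨hg1, hg2⟩ := hg01 b hb
    rw [abs_le]
    constructor <;> nlinarith
  nlinarith [abs_nonneg (a - m)]

lemma gam_diff2
    (hfLip : ∀ a ∈ Set.Icc (0:ℝ) 1, ∀ b ∈ Set.Icc (0:ℝ) 1, |f a - f b| ≤ M * |a - b|)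
    (hgLip : ∀ a ∈ Set.Icc (0:ℝ) 1, ∀ b ∈ Set.Icc (0:ℝ) 1, |g a - g b| ≤ M * |a - b|)
    (m b b' : ℝ) (hm : m ∈ Set.Icc (0:ℝ) 1) (hb : b ∈ Set.Icc (0:ℝ) 1)
    (hb' : b' ∈ Set.Icc (0:ℝ) 1) :
    |gam f g m b - gam f g m b'| ≤ M * |b - b'| := by
  have e : gam f g m b - gam f g m b'
      = m * (f b' - f b) + (1 - m) * (g b - g b') := by rw [gam, gam]; ring
  have h1 := hfLip b' hb' b hb
  have h2 := hgLip b hb b' hb'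
  rw [abs_sub_comm b' b] at h1
  have A := abs_add_le (m * (f b' - f b)) ((1 - m) * (g b - g b'))
  rw [abs_mul, abs_mul, abs_of_nonneg hm.1, abs_of_nonneg (by linarith [hm.2] : (0:ℝ) ≤ 1 - m)] at A
  rw [e]
  nlinarith [mul_le_mul_of_nonneg_left h1 hm.1,
    mul_le_mul_of_nonneg_left h2 (by linarith [hm.2] : (0:ℝ) ≤ 1 - m),
    abs_nonneg (f b' - f b), abs_nonneg (g b - g b')]

lemma det_close
    (hdeg : ∀ v : V, 0 < G.degree v)
    (hf01 : ∀ a ∈ Set.Icc (0:ℝ) 1, f a ∈ Set.Icc (0:ℝ) 1)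
    (hg01 : ∀ a ∈ Set.Icc (0:ℝ) 1, g a ∈ Set.Icc (0:ℝ) 1)
    (hfLip : ∀ a ∈ Set.Icc (0:ℝ) 1, ∀ b ∈ Set.Icc (0:ℝ) 1, |f a - f b| ≤ M * |a - b|)
    (hgLip : ∀ a ∈ Set.Icc (0:ℝ) 1, ∀ b ∈ Set.Icc (0:ℝ) 1, |g a - g b| ≤ M * |a - b|)
    (p : ℝ) (hp : p ∈ Set.Icc (0:ℝ) 1) (eps : ℝ) (heps : 0 < eps)
    (y : V → Bool)
    (hclose : ∀ v, |nbrAvg G (fun w => b2r (y w)) v - p| ≤ eps) :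
    ∀ t, 1 ≤ t → ∀ v,
      |det G f g (fun w => b2r (y w)) t v - (fun s => s * (1 - f s) + (1 - s) * g s)^[t] p|
        ≤ (max p (1 - p) * |1 - f p - g p| + M * eps) * Real.exp (2 * M * ((t : ℝ) - 1)) := by
  have hM : 0 ≤ M := M_nonneg f M hfLip
  set x0 : V → ℝ := fun w => b2r (y w) with hx0
  have hx0I : ∀ w, x0 w ∈ Set.Icc (0:ℝ) 1 := by
    intro w; cases hw : y w <;> simp [hx0, b2r, hw]
  set C : ℝ := max p (1 - p) * |1 - f p - g p| + M * eps with hC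
  have hq0 : 0 ≤ max p (1 - p) := le_trans hp.1 (le_max_left _ _)
  have hC0 : 0 ≤ C := by
    have := abs_nonneg (1 - f p - g p)
    have := mul_nonneg hq0 this
    nlinarith [mul_nonneg hM heps.le]
  intro t ht
  induction t, ht using Nat.le_induction with
  | base =>
    intro v
    have hb : nbrAvg G x0 v ∈ Set.Icc (0:ℝ) 1 := nbrAvg_mem_Icc hdeg x0 hx0I v
    have e1 : det G f g x0 1 v = gam f g (x0 v) (nbrAvg G x0 v) := rfl
    have e2 : (fun s => s * (1 - f s) + (1 - s) * g s)^[1] p = gam f g p p := by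
      simp [gam]
    rw [e1, e2]
    have htri : |gam f g (x0 v) (nbrAvg G x0 v) - gam f g p p|
        ≤ |gam f g (x0 v) (nbrAvg G x0 v) - gam f g (x0 v) p|
          + |gam f g (x0 v) p - gam f g p p| := abs_sub_le _ _ _
    have h1 : |gam f g (x0 v) (nbrAvg G x0 v) - gam f g (x0 v) p| ≤ M * eps := by
      calc |gam f g (x0 v) (nbrAvg G x0 v) - gam f g (x0 v) p|
          ≤ M * |nbrAvg G x0 v - p| := gam_diff2 hfLip hgLip _ _ _ (hx0I v) hb hp
        _ ≤ M * eps := mul_le_mul_of_nonneg_left (hclose v) hM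
    have h2 : |gam f g (x0 v) p - gam f g p p| ≤ max p (1 - p) * |1 - f p - g p| := by
      have e : gam f g (x0 v) p - gam f g p p = (x0 v - p) * (1 - f p - g p) := by
        rw [gam, gam]; ring
      rw [e, abs_mul]
      apply mul_le_mul_of_nonneg_right _ (abs_nonneg _)
      cases hw' : y v
      · have hxv : x0 v = 0 := by simp [hx0, b2r, hw']
        rw [hxv, zero_sub, abs_neg, abs_of_nonneg hp.1]
        exact le_max_left _ _
      · have hxv : x0 v = 1 := by simp [hx0, b2r, hw']
        rw [hxv, abs_of_nonneg (by linarith [hp.2] : (0:ℝ) ≤ 1 - p)]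
        exact le_max_right _ _
    have : Real.exp (2 * M * ((1 : ℕ) - 1 : ℝ)) = 1 := by norm_num
    rw [this, mul_one]
    calc _ ≤ _ := htri
      _ ≤ C := by rw [hC]; linarith
  | succ t ht ih =>
    intro v
    set m : ℝ := (fun s => s * (1 - f s) + (1 - s) * g s)^[t] p with hm
    have hmI : m ∈ Set.Icc (0:ℝ) 1 := iter_mem_Icc hf01 hg01 p hp t
    have haI : ∀ w, det G f g x0 t w ∈ Set.Icc (0:ℝ) 1 := det_mem_Icc hdeg hf01 hg01 x0 hx0I t
    have hbI : nbrAvg G (det G f g x0 t) v ∈ Set.Icc (0:ℝ) 1 :=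
      nbrAvg_mem_Icc hdeg _ haI v
    set D : ℝ := C * Real.exp (2 * M * ((t : ℝ) - 1)) with hD
    have hD0 : 0 ≤ D := mul_nonneg hC0 (Real.exp_pos _).le
    have e1 : det G f g x0 (t+1) v
        = gam f g (det G f g x0 t v) (nbrAvg G (det G f g x0 t) v) := rfl
    have e2 : (fun s => s * (1 - f s) + (1 - s) * g s)^[t+1] p = gam f g m m := by
      rw [Function.iterate_succ_apply']
      rfl
    rw [e1, e2]
    have hbm : |nbrAvg G (det G f g x0 t) v - m| ≤ D :=
      nbrAvg_close hdeg _ m D hD0 (fun w => ih w) v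
    have h1 : |gam f g (det G f g x0 t v) (nbrAvg G (det G f g x0 t) v)
        - gam f g m (nbrAvg G (det G f g x0 t) v)| ≤ D :=
      le_trans (gam_diff1 hf01 hg01 _ _ _ hbI) (ih v)
    have h2 : |gam f g m (nbrAvg G (det G f g x0 t) v) - gam f g m m| ≤ M * D := by
      calc _ ≤ M * |nbrAvg G (det G f g x0 t) v - m| := gam_diff2 hfLip hgLip _ _ _ hmI hbI hmI
        _ ≤ M * D := mul_le_mul_of_nonneg_left hbm hM
    have htri := abs_sub_le (gam f g (det G f g x0 t v) (nbrAvg G (det G f g x0 t) v))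
      (gam f g m (nbrAvg G (det G f g x0 t) v)) (gam f g m m)
    have hgrow : (1 + M) * D ≤ C * Real.exp (2 * M * (((t:ℕ)+1 : ℝ) - 1)) := by
      have hexp : 1 + M ≤ Real.exp (2 * M) := by
        have h1 := Real.add_one_le_exp M
        have h2 : Real.exp M ≤ Real.exp (2 * M) := Real.exp_le_exp.2 (by linarith)
        linarith
      calc (1 + M) * D ≤ Real.exp (2 * M) * D := mul_le_mul_of_nonneg_right hexp hD0
        _ = C * Real.exp (2 * M * (((t:ℕ)+1 : ℝ) - 1)) := by
          rw [hD, ← mul_assoc, mul_comm (Real.exp (2*M)) C, mul_assoc, ← Real.exp_add]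
          congr 2
          ring
    push_cast at hgrow ⊢
    linarith [htri, h1, h2, hgrow]
end Det

end DetPart
/-- **Proposition (Diagonal Concentration — quantitative)**. -/
theorem diagonal_concentration_quantitative
    {V : Type} [Fintype V] [DecidableEq V] [Nonempty V]
    (G : SimpleGraph V) [DecidableRel G.Adj]
    (hdeg : ∀ v : V, 0 < G.degree v)
    (f g : ℝ → ℝ) (M : ℝ)
    (hf01 : ∀ a ∈ Set.Icc (0:ℝ) 1, f a ∈ Set.Icc (0:ℝ) 1)
    (hg01 : ∀ a ∈ Set.Icc (0:ℝ) 1, g a ∈ Set.Icc (0:ℝ) 1)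
    (hfLip : ∀ a ∈ Set.Icc (0:ℝ) 1, ∀ b ∈ Set.Icc (0:ℝ) 1, |f a - f b| ≤ M * |a - b|)
    (hgLip : ∀ a ∈ Set.Icc (0:ℝ) 1, ∀ b ∈ Set.Icc (0:ℝ) 1, |g a - g b| ≤ M * |a - b|)
    (p : ℝ) (hp : p ∈ Set.Icc (0:ℝ) 1) (eps : ℝ) (heps : 0 < eps) :
    ENNReal.ofReal (1 - 2 * (Fintype.card V : ℝ) *
        Real.exp (-2 * (Finset.univ.inf' Finset.univ_nonempty fun v : V => G.degree v : ℕ)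
          * eps ^ 2))
      ≤ bernoulliProduct (V := V) p
          {x0 | ∀ t : ℕ, 1 ≤ t → ∀ v : V,
            |det G f g (fun w => b2r (x0 w)) t v
              - (fun s => s * (1 - f s) + (1 - s) * g s)^[t] p|
              ≤ (max p (1 - p) * |1 - f p - g p| + M * eps)
                  * Real.exp (2 * M * ((t : ℝ) - 1))} := by
  classical
  set x0fam := fun (y : V → Bool) (w : V) => b2r (y w) with hx0fam
  set Sset : Set (V → Bool) := {x0 | ∀ t : ℕ, 1 ≤ t → ∀ v : V,
    |det G f g (fun w => b2r (x0 w)) t v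
      - (fun s => s * (1 - f s) + (1 - s) * g s)^[t] p|
      ≤ (max p (1 - p) * |1 - f p - g p| + M * eps)
          * Real.exp (2 * M * ((t : ℝ) - 1))} with hSset
  set P : V → (V → Bool) → Prop :=
    fun v y => |nbrAvg G (fun w => b2r (y w)) v - p| ≤ eps with hP
  set E : Finset (V → Bool) := Finset.univ.filter (fun y => ∀ v, P v y) with hE
  have hE_sub : ∀ y ∈ E, y ∈ Sset := by
    intro y hy
    rw [hE, Finset.mem_filter] at hy
    intro t ht v
    exact det_close hdeg hf01 hg01 hfLip hgLip p hp eps heps y hy.2 t ht v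
  have hmeas := bp_ge p hp.1 hp.2 Sset E hE_sub
  refine le_trans ?_ hmeas
  apply ENNReal.ofReal_le_ofReal
  -- it remains to bound the total weight of E from below
  set w : (V → Bool) → ℝ := fun y => ∏ v, if y v then p else 1 - p with hw
  have hsplit := Finset.sum_filter_add_sum_filter_not Finset.univ (fun y => ∀ v, P v y) w
  have hone : ∑ y : V → Bool, w y = 1 := sum_weight_one p
  set delta : ℕ := Finset.univ.inf' Finset.univ_nonempty (fun v : V => G.degree v) with hdelta
  have hbad : ∑ y ∈ Finset.univ.filter (fun y => ¬ ∀ v, P v y), w y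
      ≤ 2 * (Fintype.card V : ℝ) * Real.exp (-2 * (delta : ℝ) * eps ^ 2) := by
    have hub := union_bound Finset.univ w (fun y => weight_nonneg p hp.1 hp.2 y) P
    refine le_trans hub ?_
    have hterm : ∀ v : V, ∑ y ∈ Finset.univ.filter (fun y => ¬ P v y), w y
        ≤ 2 * Real.exp (-2 * (delta : ℝ) * eps ^ 2) := by
      intro v
      have hfe : Finset.univ.filter (fun y => ¬ P v y)
          = Finset.univ.filter (fun y : V → Bool =>
              eps < |(∑ u ∈ G.neighborFinset v, b2r (y u)) / ((G.neighborFinset v).card : ℝ) - p|) := by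
        apply Finset.filter_congr
        intro y _
        rw [hP]
        simp only [not_le]
        rw [SimpleGraph.card_neighborFinset_eq_degree]
        rfl
      rw [hfe]
      have hc : 0 < (G.neighborFinset v).card := by
        rw [SimpleGraph.card_neighborFinset_eq_degree]; exact hdeg v
      refine le_trans (tail_le (G.neighborFinset v) hc p eps hp.1 hp.2 heps) ?_
      have hdle : (delta : ℝ) ≤ ((G.neighborFinset v).card : ℝ) := by
        rw [SimpleGraph.card_neighborFinset_eq_degree]
        exact_mod_cast Finset.inf'_le _ (Finset.mem_univ v)
      have : -2 * ((G.neighborFinset v).card : ℝ) * eps ^ 2 ≤ -2 * (delta : ℝ) * eps ^ 2 := by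
        nlinarith [sq_nonneg eps]
      have := Real.exp_le_exp.2 this
      linarith
    calc ∑ v : V, ∑ y ∈ Finset.univ.filter (fun y => ¬ P v y), w y
        ≤ ∑ _v : V, 2 * Real.exp (-2 * (delta : ℝ) * eps ^ 2) :=
          Finset.sum_le_sum (fun v _ => hterm v)
      _ = 2 * (Fintype.card V : ℝ) * Real.exp (-2 * (delta : ℝ) * eps ^ 2) := by
          rw [Finset.sum_const, nsmul_eq_mul, Finset.card_univ]
          ring
  have : (1:ℝ) - 2 * (Fintype.card V : ℝ) * Real.exp (-2 * (delta : ℝ) * eps ^ 2)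
      ≤ ∑ y ∈ E, w y := by
    rw [hE]
    linarith [hsplit, hone ▸ hsplit, hbad, hone]
  exact this

end
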